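/- Let P be a nonempty finite index set, ε > 0, and for each i ∈ P let γ_i ≥ 0, q_i ≥ 0 and α_i > 0 be given. Let γ̃_1 < γ̃_2 < ... < γ̃_ũ be the distinct values among {γ_i : i ∈ P}, and for u = 1,...,ũ set C_u = {i ∈ P : γ_i ≤ γ̃_u} and λ̃_u = (Σ_{i∈C_u} α_i) / (Σ_{i∈C_u} q_i + ε), with λ̃_0 = 0. Consider f(λ) = Σ_{i∈P} [ max{λ, γ_i}·q_i − α_i·log max{λ, γ_i} ] + ε·λ on the domain D = {λ ≥ 0 : max{λ, γ_i} > 0 for all i ∈ P}. Then f attains its minimum over D, and every minimizer of f over D belongs to the finite set M₁ = {γ̃_1, ..., γ̃_ũ} ∪ {λ̃_0, λ̃_1, ..., λ̃_ũ} (intersected with D). -/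

import Mathlib

open Finset

/-- The hyperparameter update step for the weights `λ` in the generalized
maximum-likelihood scheme with the max prior: the function
`f(λ) = ∑ᵢ [max{λ, γᵢ} qᵢ − αᵢ log max{λ, γᵢ}] + ε λ` attains its minimum over
`D = {λ ≥ 0 : max{λ, γᵢ} > 0 ∀ i}`, and every minimizer belongs to the finite set
`M₁` consisting of the values `γᵢ`, of `0`, and of the candidate stationary points
`(∑_{i : γᵢ ≤ γⱼ} αᵢ) / (∑_{i : γᵢ ≤ γⱼ} qᵢ + ε)`. -/
theorem max_prior_lambda_update_minimizers
    (ι : Type) [Fintype ι] [Nonempty ι] (ε : ℝ) (hε : 0 < ε)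
    (γ q α : ι → ℝ) (hγ : ∀ i, 0 ≤ γ i) (hq : ∀ i, 0 ≤ q i) (hα : ∀ i, 0 < α i) :
    let f : ℝ → ℝ := fun lam =>
      (∑ i : ι, (max lam (γ i) * q i - α i * Real.log (max lam (γ i)))) + ε * lam
    let D : Set ℝ := {lam | 0 ≤ lam ∧ ∀ i : ι, 0 < max lam (γ i)}
    let M : Set ℝ := Set.range γ ∪ {0} ∪
      Set.range (fun j : ι =>
        (∑ i ∈ Finset.univ.filter fun i => γ i ≤ γ j, α i) /
          ((∑ i ∈ Finset.univ.filter fun i => γ i ≤ γ j, q i) + ε))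
    (∃ lam ∈ D, ∀ μ ∈ D, f lam ≤ f μ) ∧
      ∀ lam ∈ D, (∀ μ ∈ D, f lam ≤ f μ) → lam ∈ M := by
  intro f D M
  classical
  have hIoi : Set.Ioi (0:ℝ) ⊆ D := fun l hl =>
    ⟨le_of_lt hl, fun i => lt_max_iff.mpr (Or.inl hl)⟩
  -- continuity on D
  have hcont : ContinuousOn f D := by
    apply ContinuousOn.add _ ((continuous_const.mul continuous_id).continuousOn)
    apply continuousOn_finset_sum
    intro i _
    apply ContinuousOn.sub
    · exact ((continuous_id.max continuous_const).mul continuous_const).continuousOn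
    · apply ContinuousOn.mul continuousOn_const
      apply ContinuousOn.log ((continuous_id.max continuous_const).continuousOn)
      intro x hx; exact ne_of_gt (hx.2 i)
  set lam0 : ℝ := 1 + ∑ i : ι, γ i with hlam0def
  have hγsum : 0 ≤ ∑ i : ι, γ i := Finset.sum_nonneg fun i _ => hγ i
  have hlam0_ge1 : (1:ℝ) ≤ lam0 := by simp only [hlam0def]; linarith
  have hlam0γ : ∀ i, γ i < lam0 := fun i => by
    have h1 : γ i ≤ ∑ j : ι, γ j := Finset.single_le_sum (fun j _ => hγ j) (mem_univ i)
    simp only [hlam0def]; linarith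
  have hlam0D : lam0 ∈ D := hIoi (by simp only [Set.mem_Ioi]; linarith)
  set A : ℝ := ∑ i : ι, α i with hAdef
  have hA : 0 < A := Finset.sum_pos (fun i _ => hα i) univ_nonempty
  set s0 : ℝ := max ((2*A + |f lam0| + 1)/ε) 1 with hs0def
  have hs0_1 : (1:ℝ) ≤ s0 := le_max_right _ _
  set R : ℝ := max lam0 (s0^2) with hRdef
  have hlam0R : lam0 ≤ R := le_max_left _ _
  -- large μ bound
  have hlarge : ∀ μ : ℝ, R ≤ μ → f lam0 ≤ f μ := by
    intro μ hμ
    have hμlam0 : lam0 ≤ μ := le_trans hlam0R hμ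
    have hμ1 : (1:ℝ) ≤ μ := le_trans hlam0_ge1 hμlam0
    have hμpos : (0:ℝ) < μ := by linarith
    have hf : f μ = (∑ i : ι, (μ * q i - α i * Real.log μ)) + ε * μ := by
      simp only [f]; congr 1
      apply Finset.sum_congr rfl; intro i _
      rw [max_eq_left (le_of_lt (lt_of_lt_of_le (hlam0γ i) hμlam0))]
    have hterm : ∀ i ∈ (univ : Finset ι),
        -(α i * Real.log μ) ≤ μ * q i - α i * Real.log μ := fun i _ => by
      have : 0 ≤ μ * q i := mul_nonneg (le_of_lt hμpos) (hq i); linarith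
    have hfge : ε * μ - A * Real.log μ ≤ f μ := by
      have h1 := Finset.sum_le_sum hterm
      have h2 : (∑ i : ι, -(α i * Real.log μ)) = -(A * Real.log μ) := by
        rw [Finset.sum_neg_distrib, hAdef, Finset.sum_mul]
      rw [hf]; rw [h2] at h1; linarith
    set s := Real.sqrt μ with hsdef
    have hs1 : (1:ℝ) ≤ s := by
      rw [show (1:ℝ) = Real.sqrt 1 by simp]
      exact Real.sqrt_le_sqrt hμ1
    have hss0 : s0 ≤ s := by
      have h3 : s0^2 ≤ μ := le_trans (le_max_right _ _) hμ
      calc s0 = Real.sqrt (s0^2) := (Real.sqrt_sq (by linarith)).symm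
        _ ≤ s := Real.sqrt_le_sqrt h3
    have hs2 : s^2 = μ := Real.sq_sqrt (le_of_lt hμpos)
    have hlog : Real.log μ ≤ 2 * s := by
      have h1 : Real.log μ = 2 * Real.log s := by
        rw [hsdef, Real.log_sqrt (le_of_lt hμpos)]; ring
      have h2 : Real.log s ≤ s - 1 := Real.log_le_sub_one_of_pos (by linarith)
      linarith
    have hεs0 : 2*A + |f lam0| + 1 ≤ ε * s0 := by
      have h4 : (2*A + |f lam0| + 1)/ε ≤ s0 := le_max_left _ _
      have h5 := mul_le_mul_of_nonneg_left h4 (le_of_lt hε)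
      rwa [mul_div_cancel₀ _ (ne_of_gt hε)] at h5
    have h3 : ε * s0 ≤ ε * s := mul_le_mul_of_nonneg_left hss0 hε.le
    have h4 : |f lam0| + 1 ≤ ε * s - 2*A := by linarith
    have habs0 : (0:ℝ) ≤ |f lam0| := abs_nonneg _
    have h5 : (|f lam0| + 1) * 1 ≤ (ε*s - 2*A) * s :=
      mul_le_mul h4 hs1 zero_le_one (by linarith)
    have h6 : |f lam0| + 1 ≤ ε*μ - 2*A*s := by nlinarith
    have h7 : A * Real.log μ ≤ 2*A*s := by nlinarith
    have h8 : f lam0 ≤ |f lam0| := le_abs_self _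
    linarith
  -- existence
  have hexists : ∃ lam ∈ D, ∀ μ ∈ D, f lam ≤ f μ := by
    by_cases h0 : ∀ i, 0 < γ i
    · have hsub : Set.Icc (0:ℝ) R ⊆ D := fun x hx =>
        ⟨hx.1, fun i => lt_max_iff.mpr (Or.inr (h0 i))⟩
      obtain ⟨lam, hlamIcc, hminIcc⟩ :=
        isCompact_Icc.exists_isMinOn ⟨lam0, by constructor <;> [linarith; exact hlam0R]⟩
          (hcont.mono hsub)
      refine ⟨lam, hsub hlamIcc, fun μ hμ => ?_⟩
      by_cases hμR : μ ≤ R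
      · exact isMinOn_iff.mp hminIcc μ ⟨hμ.1, hμR⟩
      · calc f lam ≤ f lam0 := isMinOn_iff.mp hminIcc lam0 ⟨by linarith, hlam0R⟩
          _ ≤ f μ := hlarge μ (by linarith)
    · push_neg at h0
      obtain ⟨i₀, hi₀'⟩ := h0
      have hi₀ : γ i₀ = 0 := le_antisymm (le_of_not_gt (by simpa using hi₀')) (hγ i₀)
      set C : ℝ := ∑ i : ι, α i * Real.log (max 1 (γ i)) with hCdef
      set δ : ℝ := min 1 (Real.exp (-(C + |f lam0| + 1)/ α i₀)) with hδdef
      have hδpos : 0 < δ := lt_min one_pos (Real.exp_pos _)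
      have hδ1 : δ ≤ 1 := min_le_left _ _
      have hsmall : ∀ μ ∈ D, μ < δ → f lam0 ≤ f μ := by
        intro μ hμD hμδ
        have hμ0 : 0 < μ := by
          rcases lt_or_eq_of_le hμD.1 with h | h
          · exact h
          · exfalso; have h2 := hμD.2 i₀
            rw [← h, hi₀] at h2; simp at h2
        have hμ1 : μ ≤ 1 := le_trans hμδ.le hδ1
        have hmaxpos : ∀ i, 0 < max μ (γ i) := hμD.2
        have hterm : ∀ i ∈ (univ : Finset ι),
            -(α i * Real.log (max μ (γ i))) ≤
              max μ (γ i) * q i - α i * Real.log (max μ (γ i)) := fun i _ => by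
          have : 0 ≤ max μ (γ i) * q i := mul_nonneg (hmaxpos i).le (hq i); linarith
        have hfge : (∑ i : ι, -(α i * Real.log (max μ (γ i)))) ≤ f μ := by
          have h1 := Finset.sum_le_sum hterm
          have h2 : 0 ≤ ε * μ := by positivity
          simp only [f]; linarith
        have hmaxi₀ : max μ (γ i₀) = μ := by
          rw [hi₀]; exact max_eq_left hμ0.le
        have hsplit : (∑ i : ι, -(α i * Real.log (max μ (γ i)))) =
            -(α i₀ * Real.log μ) +
              ∑ i ∈ univ.erase i₀, -(α i * Real.log (max μ (γ i))) := by
          rw [← Finset.add_sum_erase univ _ (mem_univ i₀), hmaxi₀]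
        have htail : ∀ i ∈ univ.erase i₀,
            -(α i * Real.log (max 1 (γ i))) ≤ -(α i * Real.log (max μ (γ i))) := by
          intro i _
          have hle : max μ (γ i) ≤ max 1 (γ i) := max_le_max hμ1 le_rfl
          have h3 := Real.log_le_log (hmaxpos i) hle
          have h4 := mul_le_mul_of_nonneg_left h3 (hα i).le
          linarith
        have hCterm : ∀ i ∈ (univ : Finset ι), 0 ≤ α i * Real.log (max 1 (γ i)) :=
          fun i _ => mul_nonneg (hα i).le (Real.log_nonneg (le_max_left _ _))
        have hCle : ∑ i ∈ univ.erase i₀, α i * Real.log (max 1 (γ i)) ≤ C :=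
          Finset.sum_le_sum_of_subset_of_nonneg (Finset.subset_univ _)
            (fun i hi _ => hCterm i hi)
        have h5 : -C ≤ ∑ i ∈ univ.erase i₀, -(α i * Real.log (max μ (γ i))) := by
          have h6 := Finset.sum_le_sum htail
          rw [Finset.sum_neg_distrib] at h6
          rw [Finset.sum_neg_distrib] at h6 ⊢
          linarith
        have hlogμ : Real.log μ ≤ -(C + |f lam0| + 1)/α i₀ := by
          have h7 : μ ≤ Real.exp (-(C + |f lam0| + 1)/ α i₀) :=
            le_trans hμδ.le (min_le_right _ _)
          calc Real.log μ ≤ Real.log (Real.exp (-(C + |f lam0| + 1)/ α i₀)) :=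
                Real.log_le_log hμ0 h7
            _ = _ := Real.log_exp _
        have h8 : C + |f lam0| + 1 ≤ -(α i₀ * Real.log μ) := by
          have h9 := mul_le_mul_of_nonneg_left hlogμ (hα i₀).le
          have h10 : α i₀ * (-(C + |f lam0| + 1)/α i₀) = -(C + |f lam0| + 1) := by
            rw [mul_comm, div_mul_cancel₀ _ (ne_of_gt (hα i₀))]
          rw [h10] at h9; linarith
        have h11 : f lam0 ≤ |f lam0| := le_abs_self _
        rw [hsplit] at hfge
        linarith
      have hsub : Set.Icc δ R ⊆ D := fun x hx => hIoi (lt_of_lt_of_le hδpos hx.1)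
      obtain ⟨lam, hlamIcc, hminIcc⟩ :=
        isCompact_Icc.exists_isMinOn ⟨lam0, ⟨by linarith, hlam0R⟩⟩ (hcont.mono hsub)
      refine ⟨lam, hsub hlamIcc, fun μ hμ => ?_⟩
      have hlam0mem : lam0 ∈ Set.Icc δ R := ⟨by linarith, hlam0R⟩
      by_cases hμδ : μ < δ
      · exact le_trans (isMinOn_iff.mp hminIcc lam0 hlam0mem) (hsmall μ hμ hμδ)
      by_cases hμR : μ ≤ R
      · exact isMinOn_iff.mp hminIcc μ ⟨not_lt.mp hμδ, hμR⟩
      · exact le_trans (isMinOn_iff.mp hminIcc lam0 hlam0mem) (hlarge μ (by linarith))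
  refine ⟨hexists, ?_⟩
  -- characterization of minimizers
  intro lam hlamD hmin
  by_cases h0lam : lam = 0
  · exact Or.inl (Or.inr h0lam)
  by_cases hrange : ∃ j, γ j = lam
  · obtain ⟨j, hj⟩ := hrange
    exact Or.inl (Or.inl ⟨j, hj⟩)
  push_neg at hrange
  have hlampos : 0 < lam := lt_of_le_of_ne hlamD.1 (Ne.symm h0lam)
  -- derivative of f at lam
  have hd : HasDerivAt f
      ((∑ i ∈ univ.filter (fun i => γ i < lam), (q i - α i / lam)) + ε) lam := by
    have hsum : HasDerivAt
        (fun l => ∑ i : ι, (max l (γ i) * q i - α i * Real.log (max l (γ i))))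
        (∑ i : ι, (if γ i < lam then q i - α i / lam else 0)) lam := by
      apply HasDerivAt.fun_sum
      intro i _
      by_cases hi : γ i < lam
      · rw [if_pos hi]
        have hg : HasDerivAt (fun l : ℝ => l * q i - α i * Real.log l)
            (q i - α i / lam) lam := by
          have h1 := (hasDerivAt_id lam).mul_const (q i)
          have h2 := (Real.hasDerivAt_log (ne_of_gt hlampos)).const_mul (α i)
          have h3 := h1.sub h2
          refine h3.congr_deriv ?_
          ring
        apply hg.congr_of_eventuallyEq
        filter_upwards [isOpen_Ioi.mem_nhds hi] with x hx
        rw [max_eq_left (le_of_lt hx)]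
      · rw [if_neg hi]
        have hi' : lam < γ i := lt_of_le_of_ne (not_lt.mp hi) (Ne.symm (hrange i))
        apply (hasDerivAt_const lam (γ i * q i - α i * Real.log (γ i))).congr_of_eventuallyEq
        filter_upwards [isOpen_Iio.mem_nhds hi'] with x hx
        rw [max_eq_right (le_of_lt hx)]
    have hlin : HasDerivAt (fun l : ℝ => ε * l) ε lam := by
      simpa using (hasDerivAt_id lam).const_mul ε
    have h4 := hsum.add hlin
    refine h4.congr_deriv ?_
    rw [Finset.sum_filter]
  have hloc : IsLocalMin f lam := by
    have hDnhds : D ∈ nhds lam :=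
      Filter.mem_of_superset (isOpen_Ioi.mem_nhds hlampos) hIoi
    exact Filter.eventually_of_mem hDnhds (fun μ hμ => hmin μ hμ)
  have h0 : (∑ i ∈ univ.filter (fun i => γ i < lam), (q i - α i / lam)) + ε = 0 :=
    hloc.hasDerivAt_eq_zero hd
  set S := univ.filter (fun i => γ i < lam) with hSdef
  rcases S.eq_empty_or_nonempty with hS | hS
  · exfalso
    rw [hS] at h0
    simp at h0
    linarith
  obtain ⟨j, hjS, hjmax⟩ := S.exists_max_image γ hS
  have hjlt : γ j < lam := by
    have := (mem_filter.mp hjS).2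
    exact this
  have hSeq : univ.filter (fun i => γ i ≤ γ j) = S := by
    ext i
    simp only [hSdef, mem_filter, mem_univ, true_and]
    constructor
    · intro h; exact lt_of_le_of_lt h hjlt
    · intro h; exact hjmax i (mem_filter.mpr ⟨mem_univ i, h⟩)
  right
  refine ⟨j, ?_⟩
  simp only [hSeq]
  have hsplit : (∑ i ∈ S, (q i - α i / lam)) =
      (∑ i ∈ S, q i) - (∑ i ∈ S, α i)/lam := by
    rw [Finset.sum_sub_distrib, Finset.sum_div]
  rw [hsplit] at h0
  have hQ : 0 ≤ ∑ i ∈ S, q i := Finset.sum_nonneg fun i _ => hq i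
  have hden : 0 < (∑ i ∈ S, q i) + ε := by linarith
  rw [div_eq_iff (ne_of_gt hden)]
  have h12 : (∑ i ∈ S, α i)/lam = (∑ i ∈ S, q i) + ε := by linarith
  field_simp at h12
  linarith
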